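/- Let d ≥ 1 and let (Y_x)_{x∈ℤ^d} be independent, identically distributed nonnegative real random variables with E[(Y_0 / log₊ Y_0)^d] < ∞. Then almost surely lim_{|x|→∞} Y_x/(|x|·log|x|) = 0; that is, for every ε > 0, almost surely Y_x ≤ ε·|x|·log|x| for all but finitely many x ∈ ℤ^d. -/

import Mathlib

open MeasureTheory ProbabilityTheory ENNReal

/-- Truncated logarithm `log₊`. -/
noncomputable def sgLogp (y : ℝ) : ℝ := if Real.exp 1 < y then Real.log y else 1

lemma sgLogp_pos (y : ℝ) : 0 < sgLogp y := by
  unfold sgLogp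
  split_ifs with h
  · have h1 : (1:ℝ) < Real.log y := by
      have := Real.log_lt_log (Real.exp_pos 1) h
      rwa [Real.log_exp] at this
    linarith
  · norm_num

lemma sgKey {ε t y : ℝ} (hε : 0 < ε)
    (ht : max (Real.exp (2/ε)) (Real.exp 2) ≤ t)
    (h : ε * t * Real.log t < y) :
    Real.exp 1 < y ∧ t ≤ max (2/ε) 2 * (y / Real.log y) := by
  have hN2 : Real.exp 2 ≤ t := le_trans (le_max_right _ _) ht
  have hNε : Real.exp (2/ε) ≤ t := le_trans (le_max_left _ _) ht
  have ht0 : 0 < t := lt_of_lt_of_le (Real.exp_pos 2) hN2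
  have hlt2 : 2 ≤ Real.log t := by
    have := Real.log_le_log (Real.exp_pos 2) hN2
    rwa [Real.log_exp] at this
  have hltε : 2/ε ≤ Real.log t := by
    have := Real.log_le_log (Real.exp_pos _) hNε
    rwa [Real.log_exp] at this
  have hεlog : 2 ≤ ε * Real.log t := by
    have h1 : ε * (2/ε) ≤ ε * Real.log t := mul_le_mul_of_nonneg_left hltε hε.le
    rwa [mul_div_cancel₀ _ (ne_of_gt hε)] at h1
  have h2t : 2 * t < y := by nlinarith
  have hey : Real.exp 1 < y := by
    have h1 : Real.exp 1 ≤ Real.exp 2 := Real.exp_le_exp.2 (by norm_num)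
    nlinarith
  have hy0 : 0 < y := lt_trans (Real.exp_pos 1) hey
  have hL1 : 1 < Real.log y := by
    have := Real.log_lt_log (Real.exp_pos 1) hey
    rwa [Real.log_exp] at this
  have hL0 : 0 < Real.log y := by linarith
  refine ⟨hey, ?_⟩
  have hyL : 0 ≤ y / Real.log y := div_nonneg hy0.le hL0.le
  rcases le_or_gt t (Real.sqrt y) with hts | hts
  · have hs0 : 0 < Real.sqrt y := Real.sqrt_pos.2 hy0
    have hlog2 : Real.log y ≤ 2 * Real.sqrt y := by
      have h1 : Real.log (Real.sqrt y) ≤ Real.sqrt y - 1 :=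
        Real.log_le_sub_one_of_pos hs0
      have h2 : Real.log (Real.sqrt y) = Real.log y / 2 := Real.log_sqrt hy0.le
      linarith
    have hsq : Real.sqrt y * Real.sqrt y = y := Real.mul_self_sqrt hy0.le
    have key : Real.sqrt y ≤ 2 * (y / Real.log y) := by
      rw [mul_div_assoc'] at *
      rw [le_div_iff₀ hL0]
      nlinarith
    have hmax : (2:ℝ) ≤ max (2/ε) 2 := le_max_right _ _
    calc t ≤ Real.sqrt y := hts
      _ ≤ 2 * (y / Real.log y) := key
      _ ≤ max (2/ε) 2 * (y / Real.log y) := mul_le_mul_of_nonneg_right hmax hyL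
  · have hs0 : 0 < Real.sqrt y := Real.sqrt_pos.2 hy0
    have hhalf : Real.log y / 2 ≤ Real.log t := by
      have h1 := Real.log_le_log hs0 hts.le
      rwa [Real.log_sqrt hy0.le] at h1
    have hpos : 0 < ε * (Real.log y / 2) := by positivity
    have h4 : t * (ε * (Real.log y / 2)) < y := by nlinarith
    have h5 : t ≤ y / (ε * (Real.log y / 2)) := (le_div_iff₀ hpos).2 h4.le
    have h6 : y / (ε * (Real.log y / 2)) = (2/ε) * (y / Real.log y) := by
      field_simp
    have hmax : 2/ε ≤ max (2/ε) 2 := le_max_left _ _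
    calc t ≤ y / (ε * (Real.log y / 2)) := h5
      _ = (2/ε) * (y / Real.log y) := h6
      _ ≤ max (2/ε) 2 * (y / Real.log y) := mul_le_mul_of_nonneg_right hmax hyL

lemma sgPowAdd (d : ℕ) {a b : ℝ} (ha : 0 ≤ a) (hb : 0 ≤ b) :
    (a + b) ^ d ≤ 2 ^ d * (a ^ d + b ^ d) := by
  have h1 : a + b ≤ 2 * max a b := by
    rcases le_total a b with h | h
    · rw [max_eq_right h]; linarith
    · rw [max_eq_left h]; linarith
  have h2 : (a + b) ^ d ≤ (2 * max a b) ^ d :=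
    pow_le_pow_left₀ (by linarith) h1 d
  have h3 : (2 * max a b) ^ d = 2 ^ d * (max a b) ^ d := mul_pow 2 _ d
  have h4 : (max a b) ^ d ≤ a ^ d + b ^ d := by
    rcases le_total a b with h | h
    · rw [max_eq_right h]
      have : 0 ≤ a ^ d := pow_nonneg ha d
      linarith
    · rw [max_eq_left h]
      have : 0 ≤ b ^ d := pow_nonneg hb d
      linarith
  calc (a + b) ^ d ≤ (2 * max a b) ^ d := h2
    _ = 2 ^ d * (max a b) ^ d := h3
    _ ≤ 2 ^ d * (a ^ d + b ^ d) := by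
        apply mul_le_mul_of_nonneg_left h4
        positivity

lemma sgTsumIndicatorTop {ι : Type*} {A : Set ι} (hA : A.Infinite) :
    ∑' (x : ι), A.indicator (1 : ι → ℝ≥0∞) x = ⊤ := by
  have h1 : ∑' (x : ι), A.indicator (1 : ι → ℝ≥0∞) x = ∑' (_ : A), (1 : ℝ≥0∞) :=
    (tsum_subtype A (1 : ι → ℝ≥0∞)).symm
  rw [h1]
  haveI := hA.to_subtype
  exact ENNReal.tsum_const_eq_top_of_ne_zero one_ne_zero

/-- For an i.i.d. family `(Y_x)_{x ∈ ℤ^d}` of nonnegative random variables with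
`E[(Y₀ / log₊ Y₀)^d] < ∞`, almost surely `Y_x / (|x| log |x|) → 0` as `|x| → ∞`:
for each `ε > 0`, almost surely `Y_x ≤ ε |x| log |x|` for all but finitely many `x`,
where `|x|` is the Euclidean norm and `log₊ y = log y` for `y > e`, `= 1` otherwise. -/
theorem iid_field_sublinear_growth {Ω : Type*} [MeasurableSpace Ω]
    (μ : Measure Ω) [IsProbabilityMeasure μ]
    (d : ℕ) (hd : 1 ≤ d) (Y : (Fin d → ℤ) → Ω → ℝ)
    (hmeas : ∀ x, Measurable (Y x))
    (hnonneg : ∀ x ω, 0 ≤ Y x ω)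
    (hindep : iIndepFun Y μ)
    (hident : ∀ x, IdentDistrib (Y x) (Y 0) μ μ)
    (hint : Integrable
      (fun ω => (Y 0 ω / (if Real.exp 1 < Y 0 ω then Real.log (Y 0 ω) else 1)) ^ d) μ) :
    ∀ ε : ℝ, 0 < ε → ∀ᵐ ω ∂μ,
      {x : Fin d → ℤ |
        ¬ Y x ω ≤ ε * Real.sqrt (∑ i, ((x i : ℝ)) ^ 2) *
            Real.log (Real.sqrt (∑ i, ((x i : ℝ)) ^ 2))}.Finite := by
  intro ε hε
  classical
  -- notation
  set K : ℝ := max (2/ε) 2 with hKdef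
  set N : ℝ := max (Real.exp (2/ε)) (Real.exp 2) with hNdef
  have hN0 : 0 < N := lt_of_lt_of_le (Real.exp_pos 2) (le_max_right _ _)
  have hK0 : 0 < K := lt_of_lt_of_le two_pos (le_max_right _ _)
  set r : (Fin d → ℤ) → ℝ := fun x => Real.sqrt (∑ i, ((x i : ℝ)) ^ 2) with hrdef
  set c : (Fin d → ℤ) → ℝ := fun x => ε * r x * Real.log (r x) with hcdef
  set s : (Fin d → ℤ) → Set Ω := fun x => {ω | c x < Y x ω} with hsdef
  have hsm : ∀ x, MeasurableSet (s x) := fun x =>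
    measurableSet_lt measurable_const (hmeas x)
  set s0 : (Fin d → ℤ) → Set Ω := fun x => {ω | c x < Y 0 ω} with hs0def
  have hs0m : ∀ x, MeasurableSet (s0 x) := fun x =>
    measurableSet_lt measurable_const (hmeas 0)
  set Z : Ω → ℝ := fun ω => Y 0 ω / sgLogp (Y 0 ω) with hZdef
  have hZ0 : ∀ ω, 0 ≤ Z ω := fun ω => div_nonneg (hnonneg 0 ω) (sgLogp_pos _).le
  set M : Ω → ℝ := fun ω => max N (K * Z ω) with hMdef
  have hM0 : ∀ ω, 0 < M ω := fun ω => lt_of_lt_of_le hN0 (le_max_left _ _)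
  set m : Ω → ℕ := fun ω => ⌊M ω⌋₊ with hmdef
  set C : Ω → Finset (Fin d → ℤ) :=
    fun ω => Fintype.piFinset (fun _ : Fin d => Finset.Icc (-(m ω : ℤ)) (m ω : ℤ)) with hCdef
  -- component bound
  have hri : ∀ (x : Fin d → ℤ) (i : Fin d), |((x i : ℝ))| ≤ r x := by
    intro x i
    have h1 : ((x i : ℝ)) ^ 2 ≤ ∑ j, ((x j : ℝ)) ^ 2 :=
      Finset.single_le_sum (f := fun j => ((x j : ℝ)) ^ 2) (fun j _ => sq_nonneg _)
        (Finset.mem_univ i)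
    calc |((x i : ℝ))| = Real.sqrt (((x i : ℝ)) ^ 2) := (Real.sqrt_sq_eq_abs _).symm
      _ ≤ r x := Real.sqrt_le_sqrt h1
  -- box inclusion
  have hbox : ∀ (ω : Ω) (x : Fin d → ℤ), ω ∈ s0 x → x ∈ C ω := by
    intro ω x hx
    have hx' : c x < Y 0 ω := hx
    have hrM : r x ≤ M ω := by
      rcases lt_or_ge (r x) N with h | h
      · exact le_trans h.le (le_max_left _ _)
      · have h' : max (Real.exp (2/ε)) (Real.exp 2) ≤ r x := by rwa [← hNdef]
        have hcx : ε * r x * Real.log (r x) < Y 0 ω := hx'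
        obtain ⟨hey, hle⟩ := sgKey hε h' hcx
        have hlogp : sgLogp (Y 0 ω) = Real.log (Y 0 ω) := by
          unfold sgLogp; rw [if_pos hey]
        have hZ : Z ω = Y 0 ω / Real.log (Y 0 ω) := by rw [hZdef]; simp [hlogp]
        have : r x ≤ K * Z ω := by rw [hZ, hKdef]; exact hle
        exact le_trans this (le_max_right _ _)
    rw [hCdef, Fintype.mem_piFinset]
    intro i
    rw [Finset.mem_Icc]
    have h1 : ((x i).natAbs : ℝ) ≤ M ω := by
      have h0 := le_trans (hri x i) hrM
      rw [Nat.cast_natAbs, Int.cast_abs]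
      exact h0
    have h3 : (x i).natAbs ≤ m ω := Nat.le_floor h1
    omega
  -- cardinality bound
  have hcard : ∀ ω : Ω, (((C ω).card : ℝ)) ≤ (2 * M ω + 1) ^ d := by
    intro ω
    have hc1 : (C ω).card = (2 * m ω + 1) ^ d := by
      rw [hCdef, Fintype.card_piFinset]
      simp only [Int.card_Icc, Finset.prod_const, Finset.card_univ, Fintype.card_fin]
      congr 1
      omega
    rw [hc1]
    push_cast
    have hm1 : (m ω : ℝ) ≤ M ω := Nat.floor_le (hM0 ω).le
    apply pow_le_pow_left₀ (by positivity)
    linarith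
  -- pointwise tsum bound
  have hGle : ∀ ω : Ω, (∑' (x : Fin d → ℤ), (s0 x).indicator (1 : Ω → ℝ≥0∞) ω)
      ≤ ENNReal.ofReal ((2 * M ω + 1) ^ d) := by
    intro ω
    have hind : ∀ x : Fin d → ℤ, (s0 x).indicator (1 : Ω → ℝ≥0∞) ω
        ≤ ((C ω : Set (Fin d → ℤ))).indicator (1 : (Fin d → ℤ) → ℝ≥0∞) x := by
      intro x
      by_cases hx : ω ∈ s0 x
      · rw [Set.indicator_of_mem hx,
          Set.indicator_of_mem (Finset.mem_coe.2 (hbox ω x hx))]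
        exact le_rfl
      · rw [Set.indicator_of_notMem hx]; exact zero_le
    calc (∑' (x : Fin d → ℤ), (s0 x).indicator (1 : Ω → ℝ≥0∞) ω)
        ≤ ∑' (x : Fin d → ℤ), ((C ω : Set (Fin d → ℤ))).indicator (1 : (Fin d → ℤ) → ℝ≥0∞) x :=
          ENNReal.tsum_le_tsum hind
      _ = ∑ x ∈ C ω, (1 : ℝ≥0∞) := (sum_eq_tsum_indicator _ _).symm
      _ = ((C ω).card : ℝ≥0∞) := by simp
      _ ≤ ENNReal.ofReal ((2 * M ω + 1) ^ d) := by
          rw [← ENNReal.ofReal_natCast]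
          exact ENNReal.ofReal_le_ofReal (hcard ω)
  -- the majorant is integrable
  have hint' : Integrable (fun ω => Z ω ^ d) μ := hint
  have hlintZ : (∫⁻ ω, ENNReal.ofReal (Z ω ^ d) ∂μ) < ⊤ := hint'.lintegral_lt_top
  set A : ℝ := 2 ^ d * (2 * N + 1) ^ d with hAdef
  set B : ℝ := 2 ^ d * (2 * K) ^ d with hBdef
  have hA0 : 0 ≤ A := by positivity
  have hB0 : 0 ≤ B := by positivity
  have hpoint : ∀ ω : Ω, ((2 * M ω + 1) ^ d : ℝ)
      ≤ A + B * Z ω ^ d := by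
    intro ω
    have h5 : 2 * M ω + 1 ≤ (2 * N + 1) + 2 * K * Z ω := by
      have hKZ : 0 ≤ K * Z ω := mul_nonneg hK0.le (hZ0 ω)
      have hle : M ω ≤ N + K * Z ω :=
        max_le (by linarith) (by linarith [hN0.le])
      linarith
    have h6 : ((2 * M ω + 1) : ℝ) ^ d ≤ ((2 * N + 1) + 2 * K * Z ω) ^ d := by
      apply pow_le_pow_left₀ _ h5
      have := hM0 ω; linarith
    have h7 : ((2 * N + 1) + 2 * K * Z ω) ^ d
        ≤ 2 ^ d * ((2 * N + 1) ^ d + (2 * K * Z ω) ^ d) :=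
      sgPowAdd d (by linarith) (mul_nonneg (by positivity) (hZ0 ω))
    have h8 : (2 * K * Z ω) ^ d = (2 * K) ^ d * Z ω ^ d := mul_pow _ _ d
    calc ((2 * M ω + 1) : ℝ) ^ d ≤ ((2 * N + 1) + 2 * K * Z ω) ^ d := h6
      _ ≤ 2 ^ d * ((2 * N + 1) ^ d + (2 * K * Z ω) ^ d) := h7
      _ = A + B * Z ω ^ d := by rw [h8, hAdef, hBdef]; ring
  have hphi_le : ∀ ω : Ω, ENNReal.ofReal ((2 * M ω + 1) ^ d)
      ≤ ENNReal.ofReal A + ENNReal.ofReal B * ENNReal.ofReal (Z ω ^ d) := by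
    intro ω
    calc ENNReal.ofReal ((2 * M ω + 1) ^ d)
        ≤ ENNReal.ofReal (A + B * Z ω ^ d) := ENNReal.ofReal_le_ofReal (hpoint ω)
      _ = ENNReal.ofReal A + ENNReal.ofReal (B * Z ω ^ d) := by
          rw [ENNReal.ofReal_add hA0 (mul_nonneg hB0 (pow_nonneg (hZ0 ω) d))]
      _ = ENNReal.ofReal A + ENNReal.ofReal B * ENNReal.ofReal (Z ω ^ d) := by
          rw [ENNReal.ofReal_mul hB0]
  -- total bound
  have hlint_lt : (∫⁻ ω, (∑' (x : Fin d → ℤ), (s0 x).indicator (1 : Ω → ℝ≥0∞) ω) ∂μ) < ⊤ := by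
    have h1 : (∫⁻ ω, (∑' (x : Fin d → ℤ), (s0 x).indicator (1 : Ω → ℝ≥0∞) ω) ∂μ)
        ≤ ∫⁻ ω, (ENNReal.ofReal A + ENNReal.ofReal B * ENNReal.ofReal (Z ω ^ d)) ∂μ :=
      lintegral_mono fun ω => le_trans (hGle ω) (hphi_le ω)
    have h2 : (∫⁻ ω, (ENNReal.ofReal A + ENNReal.ofReal B * ENNReal.ofReal (Z ω ^ d)) ∂μ)
        = ENNReal.ofReal A * μ Set.univ + ENNReal.ofReal B * ∫⁻ ω, ENNReal.ofReal (Z ω ^ d) ∂μ := by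
      rw [lintegral_add_left measurable_const, lintegral_const,
        lintegral_const_mul' _ _ ENNReal.ofReal_ne_top]
    have h3 : ENNReal.ofReal A * μ Set.univ + ENNReal.ofReal B
        * (∫⁻ ω, ENNReal.ofReal (Z ω ^ d) ∂μ) < ⊤ := by
      apply ENNReal.add_lt_top.2
      constructor
      · exact ENNReal.mul_lt_top ENNReal.ofReal_lt_top (measure_lt_top μ _)
      · exact ENNReal.mul_lt_top ENNReal.ofReal_lt_top hlintZ
    calc (∫⁻ ω, (∑' (x : Fin d → ℤ), (s0 x).indicator (1 : Ω → ℝ≥0∞) ω) ∂μ)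
        ≤ ∫⁻ ω, (ENNReal.ofReal A + ENNReal.ofReal B * ENNReal.ofReal (Z ω ^ d)) ∂μ := h1
      _ = _ := h2
      _ < ⊤ := h3
  -- sum of measures is finite
  have hsum_ne : (∑' (x : Fin d → ℤ), μ (s x)) ≠ ⊤ := by
    have heq : ∀ x : Fin d → ℤ, μ (s x) = μ (s0 x) := by
      intro x
      have h1 : s x = Y x ⁻¹' Set.Ioi (c x) := rfl
      have h2 : s0 x = Y 0 ⁻¹' Set.Ioi (c x) := rfl
      rw [h1, h2]
      exact (hident x).measure_mem_eq measurableSet_Ioi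
    have h3 : (∑' (x : Fin d → ℤ), μ (s0 x))
        = ∫⁻ ω, (∑' (x : Fin d → ℤ), (s0 x).indicator (1 : Ω → ℝ≥0∞) ω) ∂μ := by
      rw [lintegral_tsum (fun x => (measurable_one.indicator (hs0m x)).aemeasurable)]
      exact tsum_congr fun x => (lintegral_indicator_one (hs0m x)).symm
    rw [tsum_congr heq, h3]
    exact hlint_lt.ne
  -- Borel–Cantelli via Tonelli
  have hae : ∀ᵐ ω ∂μ, (∑' (x : Fin d → ℤ), (s x).indicator (1 : Ω → ℝ≥0∞) ω) < ⊤ := by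
    apply ae_lt_top (Measurable.ennreal_tsum fun x => measurable_one.indicator (hsm x))
    rw [lintegral_tsum (fun x => (measurable_one.indicator (hsm x)).aemeasurable)]
    rw [tsum_congr fun x => lintegral_indicator_one (hsm x)]
    exact hsum_ne
  filter_upwards [hae] with ω hω
  have hset : {x : Fin d → ℤ |
      ¬ Y x ω ≤ ε * Real.sqrt (∑ i, ((x i : ℝ)) ^ 2) *
          Real.log (Real.sqrt (∑ i, ((x i : ℝ)) ^ 2))} = {x : Fin d → ℤ | ω ∈ s x} := by
    ext x
    simp only [Set.mem_setOf_eq, not_le, hsdef, hcdef, hrdef]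
  rw [hset]
  by_contra hfin
  have hinf : ({x : Fin d → ℤ | ω ∈ s x}).Infinite := hfin
  have htop : (∑' (x : Fin d → ℤ), (s x).indicator (1 : Ω → ℝ≥0∞) ω) = ⊤ := by
    have hcongr : ∀ x : Fin d → ℤ, (s x).indicator (1 : Ω → ℝ≥0∞) ω
        = ({x : Fin d → ℤ | ω ∈ s x}).indicator (1 : (Fin d → ℤ) → ℝ≥0∞) x := by
      intro x
      by_cases hx : ω ∈ s x
      · rw [Set.indicator_of_mem hx,
          Set.indicator_of_mem (show x ∈ {x : Fin d → ℤ | ω ∈ s x} from hx)]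
        rfl
      · rw [Set.indicator_of_notMem hx,
          Set.indicator_of_notMem (show x ∉ {x : Fin d → ℤ | ω ∈ s x} from hx)]
    rw [tsum_congr hcongr]
    exact sgTsumIndicatorTop hinf
  rw [htop] at hω
  exact lt_irrefl _ hω
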